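/- Let N = (V, A, c) be a network, y, z ∈ V distinct and m ∈ ℕ₀. Then (i) the set S^{N,m}_{yz} of sequences of m arc-disjoint paths from y to z in N equals the union, over all flows f from y to z in N of value m, of the sets S^N_{yz}(f) of path-sequences appearing in some decomposition of f; and (ii) the set M^N_{yz} of maximum-length sequences of arc-disjoint paths from y to z equals the union of S^N_{yz}(f) over all maximum flows f from y to z in N. -/

import Mathlib

/-!
Networks on the complete digraph: capacities `c : V → V → ℕ` with no loops
(arcs are ordered pairs of distinct vertices; loops are given capacity 0).
-/

structure Network (V : Type*) where
  c : V → V → ℕ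
  no_loop : ∀ v, c v v = 0

namespace NetFlow

variable {V : Type*} [Fintype V] [DecidableEq V]

/-- `f` is a flow from `y` to `z` in `N`. -/
def IsFlow (N : Network V) (y z : V) (f : V → V → ℕ) : Prop :=
  (∀ u v, f u v ≤ N.c u v) ∧
  (∀ x, x ≠ y → x ≠ z → ∑ u, f u x = ∑ u, f x u)

/-- The value of a flow from `y`. -/
def flowValue (f : V → V → ℕ) (y : V) : ℤ :=
  (∑ u, (f y u : ℤ)) - ∑ u, (f u y : ℤ)

/-- The maximum flow value `φ^N_{yz}`. -/
noncomputable def maxFlowValue (N : Network V) (y z : V) : ℕ :=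
  sSup {m : ℕ | ∃ f, IsFlow N y z f ∧ flowValue f y = (m : ℤ)}

/-- `f` is a maximum flow from `y` to `z` in `N`. -/
def IsMaxFlow (N : Network V) (y z : V) (f : V → V → ℕ) : Prop :=
  IsFlow N y z f ∧ flowValue f y = (maxFlowValue N y z : ℤ)

/-- The network `N_X`: capacities of arcs incident to `X` are set to zero. -/
def removeVerts (N : Network V) (X : Finset V) : Network V where
  c u v := if u ∈ X ∨ v ∈ X then 0 else N.c u v
  no_loop v := by simp [N.no_loop v]

/-- `φ^N_{yz}(X) = φ^N_{yz} - φ^{N_X}_{yz}`. -/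
noncomputable def phiDrop (N : Network V) (y z : V) (X : Finset V) : ℤ :=
  (maxFlowValue N y z : ℤ) - (maxFlowValue (removeVerts N X) y z : ℤ)

/-- The (consecutive) arcs of a list of vertices. -/
def pathArcs (p : List V) : List (V × V) := p.zip p.tail

/-- `p` is a path from `y` to `z` in `N`: at least two distinct vertices, starting at `y`,
ending at `z`, with all consecutive arcs of positive capacity. -/
def IsPath (N : Network V) (y z : V) (p : List V) : Prop :=
  2 ≤ p.length ∧ p.Nodup ∧ p.head? = some y ∧ p.getLast? = some z ∧
    p.Chain' fun u v => 1 ≤ N.c u v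

/-- `p` is a cycle in `N`. -/
def IsCycle (N : Network V) (p : List V) : Prop :=
  3 ≤ p.length ∧ p.dropLast.Nodup ∧ p.head? = p.getLast? ∧
    p.Chain' fun u v => 1 ≤ N.c u v

/-- A sequence of arc-disjoint paths from `y` to `z` in `N`: each component is a path, and
each arc `a` is used by at most `c a` components. -/
def IsPathSeq (N : Network V) (y z : V) (γ : List (List V)) : Prop :=
  (∀ p ∈ γ, IsPath N y z p) ∧
  ∀ u v : V, γ.countP (fun p => decide ((u, v) ∈ pathArcs p)) ≤ N.c u v

/-- `λ^N_{yz}`: the maximum length of a sequence of arc-disjoint paths from `y` to `z`. -/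
noncomputable def maxSeqLen (N : Network V) (y z : V) : ℕ :=
  sSup {m : ℕ | ∃ γ : List (List V), IsPathSeq N y z γ ∧ γ.length = m}

/-- `M^N_{yz}`: the sequences of arc-disjoint paths from `y` to `z` of maximum length. -/
def MaxSeqs (N : Network V) (y z : V) : Set (List (List V)) :=
  {γ | IsPathSeq N y z γ ∧ γ.length = maxSeqLen N y z}

/-- `l_X(γ)`: the number of components of `γ` having a vertex in `X`. -/
def lX (X : Finset V) (γ : List (List V)) : ℕ :=
  γ.countP fun p => p.any fun x => decide (x ∈ X)

/-- `λ^N_{yz}(X)`: the minimum of `l_X` over maximum-length sequences of arc-disjoint paths. -/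
noncomputable def lambdaX (N : Network V) (y z : V) (X : Finset V) : ℕ :=
  sInf {n : ℕ | ∃ γ ∈ MaxSeqs N y z, lX X γ = n}

/-- The flow through a vertex: `f(x) = Σ_{a exiting x} f(a)` if `x ∉ {y,z}`, `v(f)` otherwise. -/
def vertexFlow (f : V → V → ℕ) (y z x : V) : ℤ :=
  if x = y ∨ x = z then flowValue f y else ∑ u, (f x u : ℤ)

/-- `δ^N_{yz}(X)`: the minimum of `f(X) = Σ_{x∈X} f(x)` over maximum flows `f`. -/
noncomputable def deltaX (N : Network V) (y z : V) (X : Finset V) : ℕ :=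
  sInf {n : ℕ | ∃ f, IsMaxFlow N y z f ∧ (∑ x ∈ X, vertexFlow f y z x) = (n : ℤ)}

/-- The flow `f_γ` associated with a sequence of arc-disjoint paths. -/
def seqFlow (γ : List (List V)) (u v : V) : ℕ :=
  γ.countP fun p => decide ((u, v) ∈ pathArcs p)

/-- The path (or cycle) function `χ_p` of a path or cycle `p`. -/
def chi (p : List V) (u v : V) : ℕ := (pathArcs p).count (u, v)

/-- `(γ, w)` is a decomposition of the flow `f`: `γ` is a sequence of `v(f)` paths from `y`
to `z`, `w` a sequence of cycles, and `f = Σ_j χ_{γ_j} + Σ_j χ_{w_j}`. -/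
def IsDecomposition (N : Network V) (y z : V) (f : V → V → ℕ)
    (γ w : List (List V)) : Prop :=
  (∀ p ∈ γ, IsPath N y z p) ∧ (∀ q ∈ w, IsCycle N q) ∧
  (γ.length : ℤ) = flowValue f y ∧
  ∀ u v : V, f u v = (γ.map fun p => chi p u v).sum + (w.map fun q => chi q u v).sum

/-- The forward arcs of a generalized path given by vertices `p` and directions `d`. -/
def forwardArcs (p : List V) (d : List Bool) : List (V × V) :=
  ((p.zip p.tail).zip d).filterMap fun e => if e.2 then some e.1 else none

/-- The backward arcs of a generalized path given by vertices `p` and directions `d`. -/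
def backwardArcs (p : List V) (d : List Bool) : List (V × V) :=
  ((p.zip p.tail).zip d).filterMap fun e => if e.2 then none else some (e.1.2, e.1.1)

/-- `(p, d)` is a generalized path from `y` to `z`: distinct vertices `x_1 = y, …, x_m = z`
(`m ≥ 2`), the `i`-th arc being `(x_i, x_{i+1})` (forward, `d_i = true`) or `(x_{i+1}, x_i)`
(backward, `d_i = false`). -/
def IsGenPath (y z : V) (p : List V) (d : List Bool) : Prop :=
  2 ≤ p.length ∧ p.Nodup ∧ p.head? = some y ∧ p.getLast? = some z ∧
    d.length + 1 = p.length

/-- `(p, d)` is an augmenting path for `f` from `y` to `z` in `N`. -/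
def IsAugPath (N : Network V) (y z : V) (f : V → V → ℕ)
    (p : List V) (d : List Bool) : Prop :=
  IsGenPath y z p d ∧
  (∀ a ∈ forwardArcs p d, f a.1 a.2 < N.c a.1 a.2) ∧
  (∀ a ∈ backwardArcs p d, 1 ≤ f a.1 a.2)

/-- `χ_σ` for a generalized path `σ = (p, d)`: `+1` on forward arcs, `-1` on backward arcs. -/
def chiGen (p : List V) (d : List Bool) (u v : V) : ℤ :=
  ((forwardArcs p d).count (u, v) : ℤ) - ((backwardArcs p d).count (u, v) : ℤ)

/-- The full flow vitality group centrality measure `φ^N(X)`. -/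
noncomputable def phiGC (N : Network V) (X : Finset V) : ℝ :=
  ∑ a ∈ Finset.univ.filter (fun a : V × V => a.1 ≠ a.2 ∧ 0 < maxFlowValue N a.1 a.2),
    (phiDrop N a.1 a.2 X : ℝ) / (maxFlowValue N a.1 a.2 : ℝ)

/-- The full flow betweenness group centrality measure `λ^N(X)`. -/
noncomputable def lambdaGC (N : Network V) (X : Finset V) : ℝ :=
  ∑ a ∈ Finset.univ.filter (fun a : V × V => a.1 ≠ a.2 ∧ 0 < maxFlowValue N a.1 a.2),
    (lambdaX N a.1 a.2 X : ℝ) / (maxFlowValue N a.1 a.2 : ℝ)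

end NetFlow

set_option linter.unusedSectionVars false

namespace NetFlow

variable {V : Type*} [Fintype V] [DecidableEq V]

lemma pathArcs_cons_cons (a b : V) (l : List V) :
    pathArcs (a :: b :: l) = (a, b) :: pathArcs (b :: l) := rfl

lemma mem_fst_of_mem_pathArcs {u v : V} {p : List V} (h : (u, v) ∈ pathArcs p) : u ∈ p :=
  (List.of_mem_zip h).1

lemma mem_snd_of_mem_pathArcs {u v : V} {p : List V} (h : (u, v) ∈ pathArcs p) : v ∈ p.tail :=
  (List.of_mem_zip h).2

lemma pathArcs_nodup {p : List V} (hp : p.Nodup) : (pathArcs p).Nodup := by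
  induction p with
  | nil => simp [pathArcs]
  | cons a l ih =>
    match l, hp with
    | [], _ => simp [pathArcs]
    | b :: l, hp =>
      rw [pathArcs_cons_cons]
      refine List.nodup_cons.2 ⟨fun hmem => ?_, ih hp.of_cons⟩
      exact (List.nodup_cons.1 hp).1 (mem_fst_of_mem_pathArcs hmem)

lemma rel_of_mem_pathArcs {r : V → V → Prop} {u v : V} {p : List V}
    (hc : p.Chain' r) (h : (u, v) ∈ pathArcs p) : r u v := by
  induction p with
  | nil => simp [pathArcs] at h
  | cons a l ih =>
    match l, hc, h with
    | [], _, h => simp [pathArcs] at h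
    | b :: l, hc, h =>
      rw [pathArcs_cons_cons, List.mem_cons] at h
      rcases h with h | h
      · cases h; exact (List.isChain_cons_cons.1 hc).1
      · exact ih (List.isChain_cons_cons.1 hc).2 h


/-- S1 -/
lemma sum_count_fst (l : List (V × V)) (x : V) :
    ∑ u, l.count (x, u) = l.countP (fun a => decide (a.1 = x)) := by
  induction l with
  | nil => simp
  | cons a t ih =>
    simp only [List.count_cons, List.countP_cons, Finset.sum_add_distrib, ih]
    congr 1
    rcases a with ⟨a1, a2⟩
    have he : ∀ u : V, (if ((a1, a2) == (x, u)) = true then (1:ℕ) else 0)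
        = if a2 = u then (if a1 = x then 1 else 0) else 0 := by
      intro u
      by_cases h1 : a1 = x <;> by_cases h2 : a2 = u <;> simp [Prod.ext_iff, h1, h2]
    rw [Finset.sum_congr rfl fun u _ => he u, Finset.sum_ite_eq Finset.univ a2]
    simp

/-- S2 -/
lemma sum_count_snd (l : List (V × V)) (x : V) :
    ∑ u, l.count (u, x) = l.countP (fun a => decide (a.2 = x)) := by
  induction l with
  | nil => simp
  | cons a t ih =>
    simp only [List.count_cons, List.countP_cons, Finset.sum_add_distrib, ih]
    congr 1
    rcases a with ⟨a1, a2⟩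
    have he : ∀ u : V, (if ((a1, a2) == (u, x)) = true then (1:ℕ) else 0)
        = if a1 = u then (if a2 = x then 1 else 0) else 0 := by
      intro u
      by_cases h1 : a1 = u <;> by_cases h2 : a2 = x <;> simp [Prod.ext_iff, h1, h2]
    rw [Finset.sum_congr rfl fun u _ => he u, Finset.sum_ite_eq Finset.univ a1]
    simp

/-- S3 -/
lemma countP_fst_pathArcs {p : List V} (hp : p.Nodup) (x : V) :
    (pathArcs p).countP (fun a => decide (a.1 = x)) = if x ∈ p.dropLast then 1 else 0 := by
  induction p with
  | nil => simp [pathArcs]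
  | cons a l ih =>
    match l, hp with
    | [], _ => simp [pathArcs]
    | b :: l, hp =>
      rw [pathArcs_cons_cons, List.countP_cons]
      have hdl : (a :: b :: l).dropLast = a :: (b :: l).dropLast := rfl
      rw [hdl]
      by_cases hx : x = a
      · subst hx
        have h0 : (pathArcs (b :: l)).countP (fun a' => decide (a'.1 = x)) = 0 := by
          rw [List.countP_eq_zero]
          rintro ⟨u, v⟩ hm hd
          simp only [decide_eq_true_eq] at hd
          exact (List.nodup_cons.1 hp).1 (hd ▸ mem_fst_of_mem_pathArcs hm)
        simp [h0]
      · have : x ∈ a :: (b :: l).dropLast ↔ x ∈ (b :: l).dropLast := by simp [hx]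
        rw [ih hp.of_cons]
        simp [this, hx, Ne.symm hx]

/-- S4 -/
lemma countP_snd_pathArcs {p : List V} (hp : p.Nodup) (x : V) :
    (pathArcs p).countP (fun a => decide (a.2 = x)) = if x ∈ p.tail then 1 else 0 := by
  induction p with
  | nil => simp [pathArcs]
  | cons a l ih =>
    match l, hp with
    | [], _ => simp [pathArcs]
    | b :: l, hp =>
      rw [pathArcs_cons_cons, List.countP_cons]
      by_cases hx : x = b
      · have h0 : (pathArcs (b :: l)).countP (fun a' => decide (a'.2 = x)) = 0 := by
          rw [List.countP_eq_zero]
          rintro ⟨u, v⟩ hm hd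
          simp only [decide_eq_true_eq] at hd
          have hv := mem_snd_of_mem_pathArcs hm
          simp only [List.tail_cons] at hv
          rw [hd, hx] at hv
          exact (List.nodup_cons.1 hp.of_cons).1 hv
        rw [h0]
        simp [hx]
      · rw [ih hp.of_cons]
        simp only [List.tail_cons]
        by_cases hxl : x ∈ l
        · simp [hxl, hx, Ne.symm hx]
        · simp [hxl, hx, Ne.symm hx]

end NetFlow

namespace NetFlow

variable {V : Type*} [Fintype V] [DecidableEq V]

lemma sum_chi_out {p : List V} (hp : p.Nodup) (x : V) :
    ∑ u, chi p x u = if x ∈ p.dropLast then 1 else 0 := by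
  rw [show (fun u => chi p x u) = fun u => (pathArcs p).count (x, u) from rfl,
    sum_count_fst, countP_fst_pathArcs hp]

lemma sum_chi_in {p : List V} (hp : p.Nodup) (x : V) :
    ∑ u, chi p u x = if x ∈ p.tail then 1 else 0 := by
  rw [show (fun u => chi p u x) = fun u => (pathArcs p).count (u, x) from rfl,
    sum_count_snd, countP_snd_pathArcs hp]

lemma path_mem_facts {p : List V} {y z : V} (h2 : 2 ≤ p.length) (hnd : p.Nodup)
    (hh : p.head? = some y) (hl : p.getLast? = some z) :
    y ∈ p.dropLast ∧ y ∉ p.tail ∧ z ∈ p.tail ∧ z ∉ p.dropLast ∧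
      (∀ x, x ≠ y → x ≠ z → (x ∈ p.dropLast ↔ x ∈ p.tail)) := by
  match p, h2 with
  | a :: b :: l, _ =>
    have hy : a = y := by simpa using hh
    subst hy
    have hne : (b :: l) ≠ [] := by simp
    have hlast : (b :: l).getLast hne = z := by
      have : (a :: b :: l).getLast? = (b :: l).getLast? := List.getLast?_cons_cons ..
      rw [this, List.getLast?_eq_getLast hne] at hl
      exact Option.some_injective _ hl
    have hsplit : (b :: l).dropLast ++ [z] = b :: l := by
      rw [← hlast]; exact List.dropLast_concat_getLast hne
    have hdl : (a :: b :: l).dropLast = a :: (b :: l).dropLast := rfl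
    have hanotin : a ∉ b :: l := (List.nodup_cons.1 hnd).1
    have hndbl : (b :: l).Nodup := hnd.of_cons
    have hznotin : z ∉ (b :: l).dropLast := by
      intro hz
      have := hsplit ▸ hndbl
      rcases List.nodup_append.1 this with ⟨_, _, hdisj⟩
      exact hdisj z hz z (by simp) rfl
    refine ⟨by simp [hdl], by simpa using hanotin, ?_, ?_, ?_⟩
    · show z ∈ b :: l
      rw [← hsplit]; simp
    · show z ∉ (a :: b :: l).dropLast
      rw [hdl]
      intro hz
      rcases List.mem_cons.1 hz with h | h
      · exact hanotin (h ▸ (by rw [← hsplit]; simp : z ∈ b :: l))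
      · exact hznotin h
    · intro x hxy hxz
      show x ∈ (a :: b :: l).dropLast ↔ x ∈ b :: l
      rw [hdl, List.mem_cons, ← hsplit, List.mem_append]
      simp [hxy, hxz]

end NetFlow

namespace NetFlow

variable {V : Type*} [Fintype V] [DecidableEq V]

lemma listsum_finsum {α : Type*} (γ : List α) (g : α → V → ℕ) :
    ∑ u, (γ.map fun p => g p u).sum = (γ.map fun p => ∑ u, g p u).sum := by
  induction γ with
  | nil => simp
  | cons p t ih => simp [Finset.sum_add_distrib, ih]

lemma countP_eq_sum_map {α : Type*} (γ : List α) (q : α → Bool) :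
    γ.countP q = (γ.map fun p => if q p then 1 else 0).sum := by
  induction γ with
  | nil => simp
  | cons p t ih => rw [List.countP_cons, ih]; simp; omega

lemma count_le_one_of_nodup' {α : Type*} [BEq α] [LawfulBEq α] {l : List α}
    (h : l.Nodup) (a : α) : l.count a ≤ 1 := by
  induction l with
  | nil => simp
  | cons b t ih =>
    rw [List.count_cons]
    by_cases hba : b = a
    · have : t.count a = 0 :=
        List.count_eq_zero_of_not_mem (hba ▸ (List.nodup_cons.1 h).1)
      simp [this, hba]
    · have : (b == a) = false := beq_false_of_ne hba
      simp [this]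
      exact ih (List.nodup_cons.1 h).2

lemma chi_ite {p : List V} (hp : p.Nodup) (u v : V) :
    chi p u v = if (u, v) ∈ pathArcs p then 1 else 0 := by
  unfold chi
  by_cases h : (u, v) ∈ pathArcs p
  · have h1 := count_le_one_of_nodup' (pathArcs_nodup hp) (u, v)
    have h2 := List.count_pos_iff.2 h
    simp [h]; omega
  · rw [List.count_eq_zero_of_not_mem h]; simp [h]

lemma seqFlow_eq_sum {γ : List (List V)} (hγ : ∀ p ∈ γ, p.Nodup) (u v : V) :
    seqFlow γ u v = (γ.map fun p => chi p u v).sum := by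
  rw [seqFlow, countP_eq_sum_map]
  congr 1
  refine List.map_congr_left fun p hp => ?_
  rw [chi_ite (hγ p hp)]
  by_cases h : (u, v) ∈ pathArcs p <;> simp [h]

lemma countP_le_sum (γ : List (List V)) (u v : V) :
    γ.countP (fun p => decide ((u, v) ∈ pathArcs p)) ≤ (γ.map fun p => chi p u v).sum := by
  induction γ with
  | nil => simp
  | cons p t ih =>
    rw [List.countP_cons]
    simp only [List.map_cons, List.sum_cons]
    have he : (if decide ((u, v) ∈ pathArcs p) = true then 1 else 0) ≤ chi p u v := by
      by_cases h : (u, v) ∈ pathArcs p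
      · have h1 : 0 < chi p u v := List.count_pos_iff.2 h
        simp [h]; omega
      · simp [h]
    omega

lemma flow_of_pathSeq {N : Network V} {y z : V} {γ : List (List V)} (hyz : y ≠ z)
    (hγ : IsPathSeq N y z γ) :
    IsFlow N y z (seqFlow γ) ∧ flowValue (seqFlow γ) y = (γ.length : ℤ) ∧
      IsDecomposition N y z (seqFlow γ) γ [] := by
  have hnd : ∀ p ∈ γ, p.Nodup := fun p hp => (hγ.1 p hp).2.1
  have hsum : ∀ u v, seqFlow γ u v = (γ.map fun p => chi p u v).sum :=
    fun u v => seqFlow_eq_sum hnd u v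
  have hout : ∀ x, ∑ u, seqFlow γ x u
      = (γ.map fun p => if x ∈ p.dropLast then 1 else 0).sum := by
    intro x
    rw [Finset.sum_congr rfl fun u _ => hsum x u, listsum_finsum]
    congr 1
    exact List.map_congr_left fun p hp => sum_chi_out (hnd p hp) x
  have hin : ∀ x, ∑ u, seqFlow γ u x
      = (γ.map fun p => if x ∈ p.tail then 1 else 0).sum := by
    intro x
    rw [Finset.sum_congr rfl fun u _ => hsum u x, listsum_finsum]
    congr 1
    exact List.map_congr_left fun p hp => sum_chi_in (hnd p hp) x
  have houty : ∑ u, seqFlow γ y u = γ.length := by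
    rw [hout]
    have : (γ.map fun p => if y ∈ p.dropLast then 1 else 0) = γ.map fun _ => 1 :=
      List.map_congr_left fun p hp => by
        obtain ⟨h2, hnd', hh, hl, -⟩ := hγ.1 p hp
        simp [(path_mem_facts h2 hnd' hh hl).1]
    rw [this]; simp [List.map_const]
  have hiny : ∑ u, seqFlow γ u y = 0 := by
    rw [hin]
    have : (γ.map fun p => if y ∈ p.tail then 1 else 0) = γ.map fun _ => 0 :=
      List.map_congr_left fun p hp => by
        obtain ⟨h2, hnd', hh, hl, -⟩ := hγ.1 p hp
        simp [(path_mem_facts h2 hnd' hh hl).2.1]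
    rw [this]; simp [List.map_const]
  have hcons : ∀ x, x ≠ y → x ≠ z → ∑ u, seqFlow γ u x = ∑ u, seqFlow γ x u := by
    intro x hxy hxz
    rw [hin, hout]
    congr 1
    refine List.map_congr_left fun p hp => ?_
    obtain ⟨h2, hnd', hh, hl, -⟩ := hγ.1 p hp
    have hiff := (path_mem_facts h2 hnd' hh hl).2.2.2.2 x hxy hxz
    simp only [hiff]
  have hval : flowValue (seqFlow γ) y = (γ.length : ℤ) := by
    unfold flowValue
    rw [← Nat.cast_sum, ← Nat.cast_sum, houty, hiny]
    simp
  refine ⟨⟨hγ.2, hcons⟩, hval, hγ.1, by simp, hval.symm, fun u v => by simp [hsum u v]⟩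

end NetFlow

namespace NetFlow

variable {V : Type*} [Fintype V] [DecidableEq V]

lemma chi_path_sums {p : List V} {y z : V} (h2 : 2 ≤ p.length) (hnd : p.Nodup)
    (hh : p.head? = some y) (hl : p.getLast? = some z) :
    (∑ u, chi p y u = 1) ∧ (∑ u, chi p u y = 0) ∧
      ∀ x, x ≠ y → x ≠ z → ∑ u, chi p u x = ∑ u, chi p x u := by
  obtain ⟨hy1, hy2, _, _, hx⟩ := path_mem_facts h2 hnd hh hl
  refine ⟨by rw [sum_chi_out hnd]; simp [hy1], by rw [sum_chi_in hnd]; simp [hy2], ?_⟩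
  intro x hxy hxz
  rw [sum_chi_in hnd, sum_chi_out hnd]
  simp only [hx x hxy hxz]

lemma exists_nodup_chain {r : V → V → Prop} {y z : V} (h : Relation.ReflTransGen r y z) :
    ∃ p : List V, p ≠ [] ∧ p.Nodup ∧ p.head? = some y ∧ p.getLast? = some z ∧
      p.Chain' r := by
  induction h using Relation.ReflTransGen.head_induction_on with
  | refl => exact ⟨[z], by simp, by simp, rfl, rfl, List.isChain_singleton _⟩
  | head h' _ ih =>
    rename_i a c _
    obtain ⟨p, hne, hnd, hh, hl, hc⟩ := ih
    by_cases hyp : a ∈ p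
    · obtain ⟨s, t, rfl⟩ := List.append_of_mem hyp
      refine ⟨a :: t, by simp, (List.sublist_append_right s (a :: t)).nodup hnd, rfl, ?_, ?_⟩
      · rw [List.getLast?_append] at hl
        obtain ⟨w, hw⟩ := Option.isSome_iff_exists.1 (List.getLast?_isSome.2 (by simp :
          (a :: t) ≠ []))
        rw [hw] at hl ⊢
        simpa using hl
      · exact hc.suffix ⟨s, rfl⟩
    · refine ⟨a :: p, by simp, List.nodup_cons.2 ⟨hyp, hnd⟩, rfl, ?_, ?_⟩
      · rw [show a :: p = [a] ++ p from rfl, List.getLast?_append, hl]; rfl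
      · refine List.isChain_cons.2 ⟨fun b hb => ?_, hc⟩
        rw [hh] at hb
        cases hb
        exact h'

lemma exists_path_of_flow {N : Network V} {y z : V} {f : V → V → ℕ}
    (hf : IsFlow N y z f) (hv : 1 ≤ flowValue f y) (hyz : y ≠ z) :
    ∃ p : List V, 2 ≤ p.length ∧ p.Nodup ∧ p.head? = some y ∧ p.getLast? = some z ∧
      p.Chain' fun u v => 1 ≤ f u v := by
  classical
  set r : V → V → Prop := fun u v => 1 ≤ f u v with hr
  have hreach : Relation.ReflTransGen r y z := by
    by_contra hrz
    set S : Finset V := Finset.univ.filter (fun x => Relation.ReflTransGen r y x) with hS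
    have hmemS : ∀ x, x ∈ S ↔ Relation.ReflTransGen r y x := by
      intro x; simp [hS]
    have hyS : y ∈ S := (hmemS y).2 .refl
    have hzS : z ∉ S := fun h => hrz ((hmemS z).1 h)
    have hcross : ∀ u ∈ S, ∀ v, v ∉ S → f u v = 0 := by
      intro u hu v hv'
      by_contra hne
      exact hv' ((hmemS v).2 (((hmemS u).1 hu).tail (Nat.one_le_iff_ne_zero.2 hne)))
    have key : ∑ x ∈ S, ((∑ u, (f x u : ℤ)) - ∑ u, (f u x : ℤ)) = flowValue f y := by
      rw [Finset.sum_eq_single_of_mem y hyS]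
      · rfl
      · intro x hx hxy
        have hxz : x ≠ z := fun h => hzS (h ▸ hx)
        have := hf.2 x hxy hxz
        have : (∑ u, (f u x : ℤ)) = ∑ u, (f x u : ℤ) := by
          rw [← Nat.cast_sum, ← Nat.cast_sum, this]
        omega
    have hneg : ∑ x ∈ S, ((∑ u, (f x u : ℤ)) - ∑ u, (f u x : ℤ)) ≤ 0 := by
      have hsplit : ∀ g : V → V → ℤ, ∑ x ∈ S, ∑ u, g x u
          = ∑ x ∈ S, ∑ u ∈ S, g x u + ∑ x ∈ S, ∑ u ∈ Sᶜ, g x u := by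
        intro g
        rw [← Finset.sum_add_distrib]
        exact Finset.sum_congr rfl fun x _ => (Finset.sum_add_sum_compl S (g x)).symm
      rw [Finset.sum_sub_distrib, hsplit (fun x u => (f x u : ℤ)),
        hsplit (fun x u => (f u x : ℤ))]
      have hzero : ∑ x ∈ S, ∑ u ∈ Sᶜ, (f x u : ℤ) = 0 := by
        refine Finset.sum_eq_zero fun x hx => Finset.sum_eq_zero fun u hu => ?_
        rw [hcross x hx u (Finset.mem_compl.1 hu)]; rfl
      have hcomm : ∑ x ∈ S, ∑ u ∈ S, (f x u : ℤ) = ∑ x ∈ S, ∑ u ∈ S, (f u x : ℤ) :=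
        Finset.sum_comm
      have hpos : 0 ≤ ∑ x ∈ S, ∑ u ∈ Sᶜ, (f u x : ℤ) :=
        Finset.sum_nonneg fun x _ => Finset.sum_nonneg fun u _ => Int.natCast_nonneg _
      omega
    omega
  obtain ⟨p, hne, hnd, hh, hl, hc⟩ := exists_nodup_chain hreach
  refine ⟨p, ?_, hnd, hh, hl, hc⟩
  match p, hne with
  | [a], _ =>
    exfalso
    simp only [List.head?_cons] at hh
    simp only [List.getLast?_singleton] at hl
    exact hyz (by rw [← Option.some_injective _ hh, ← Option.some_injective _ hl])
  | a :: b :: l, _ => simp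

end NetFlow

namespace NetFlow

variable {V : Type*} [Fintype V] [DecidableEq V]

lemma exists_pathSeq_of_flow {N : Network V} {y z : V} (hyz : y ≠ z) :
    ∀ (m : ℕ) (f : V → V → ℕ), IsFlow N y z f → flowValue f y = (m : ℤ) →
    ∃ γ : List (List V), γ.length = m ∧
      (∀ p ∈ γ, 2 ≤ p.length ∧ p.Nodup ∧ p.head? = some y ∧ p.getLast? = some z ∧
        p.Chain' fun u v => 1 ≤ f u v) ∧
      (∀ u v, γ.countP (fun p => decide ((u, v) ∈ pathArcs p)) ≤ f u v) := by
  intro m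
  induction m with
  | zero => exact fun f _ _ => ⟨[], rfl, by simp, by simp⟩
  | succ n ih =>
    intro f hf hval
    have h1 : 1 ≤ flowValue f y := by rw [hval]; exact_mod_cast Nat.succ_le_succ n.zero_le
    obtain ⟨p, h2, hnd, hh, hl, hc⟩ := exists_path_of_flow hf h1 hyz
    obtain ⟨hsy1, hsy0, hscons⟩ := chi_path_sums h2 hnd hh hl
    have hchile : ∀ u v, chi p u v ≤ f u v := by
      intro u v
      rw [chi_ite hnd]
      by_cases h : (u, v) ∈ pathArcs p
      · simpa [h] using rel_of_mem_pathArcs hc h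
      · simp [h]
    have hcast : ∀ u v, ((f u v - chi p u v : ℕ) : ℤ) = (f u v : ℤ) - (chi p u v : ℤ) :=
      fun u v => by rw [Nat.cast_sub (hchile u v)]
    have hsubsum : ∀ g h : V → ℕ, (∀ u, h u ≤ g u) →
        ∑ u, ((g u - h u : ℕ) : ℤ) = (∑ u, (g u : ℤ)) - ∑ u, (h u : ℤ) := by
      intro g h hle
      rw [← Finset.sum_sub_distrib]
      exact Finset.sum_congr rfl fun u _ => by rw [Nat.cast_sub (hle u)]
    set f' : V → V → ℕ := fun u v => f u v - chi p u v with hf'def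
    have hf'flow : IsFlow N y z f' := by
      refine ⟨fun u v => le_trans (Nat.sub_le _ _) (hf.1 u v), fun x hxy hxz => ?_⟩
      have hi : ∑ u, ((f' u x : ℕ) : ℤ) = (∑ u, (f u x : ℤ)) - ∑ u, (chi p u x : ℤ) :=
        hsubsum _ _ fun u => hchile u x
      have ho : ∑ u, ((f' x u : ℕ) : ℤ) = (∑ u, (f x u : ℤ)) - ∑ u, (chi p x u : ℤ) :=
        hsubsum _ _ fun u => hchile x u
      have hfc : (∑ u, (f u x : ℤ)) = ∑ u, (f x u : ℤ) := by
        rw [← Nat.cast_sum, ← Nat.cast_sum, hf.2 x hxy hxz]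
      have hcc : (∑ u, (chi p u x : ℤ)) = ∑ u, (chi p x u : ℤ) := by
        rw [← Nat.cast_sum, ← Nat.cast_sum, hscons x hxy hxz]
      have : ∑ u, ((f' u x : ℕ) : ℤ) = ∑ u, ((f' x u : ℕ) : ℤ) := by
        rw [hi, ho, hfc, hcc]
      exact_mod_cast this
    have hval' : flowValue f' y = (n : ℤ) := by
      unfold flowValue
      have ho : ∑ u, ((f' y u : ℕ) : ℤ) = (∑ u, (f y u : ℤ)) - ∑ u, (chi p y u : ℤ) :=
        hsubsum _ _ fun u => hchile y u
      have hi : ∑ u, ((f' u y : ℕ) : ℤ) = (∑ u, (f u y : ℤ)) - ∑ u, (chi p u y : ℤ) :=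
        hsubsum _ _ fun u => hchile u y
      have h1' : (∑ u, (chi p y u : ℤ)) = 1 := by rw [← Nat.cast_sum, hsy1]; rfl
      have h0' : (∑ u, (chi p u y : ℤ)) = 0 := by rw [← Nat.cast_sum, hsy0]; rfl
      have hvf : (∑ u, (f y u : ℤ)) - (∑ u, (f u y : ℤ)) = (n : ℤ) + 1 := by
        have := hval
        unfold flowValue at this
        push_cast at this ⊢
        omega
      rw [ho, hi, h1', h0']
      omega
    obtain ⟨γ, hlen, hpaths, hcount⟩ := ih f' hf'flow hval'
    refine ⟨p :: γ, by simp [hlen], ?_, ?_⟩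
    · intro q hq
      rcases List.mem_cons.1 hq with rfl | hq'
      · exact ⟨h2, hnd, hh, hl, hc⟩
      · obtain ⟨a2, and, ahh, ahl, ac⟩ := hpaths q hq'
        exact ⟨a2, and, ahh, ahl,
          ac.imp fun u v h => le_trans h (Nat.sub_le _ _)⟩
    · intro u v
      rw [List.countP_cons]
      have hcg := hcount u v
      have he : f' u v = f u v - chi p u v := rfl
      have hch := hchile u v
      by_cases h : (u, v) ∈ pathArcs p
      · have h1' : 1 ≤ chi p u v := List.count_pos_iff.2 h
        simp [h]
        omega
      · simp [h]
        omega

end NetFlow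

namespace NetFlow

variable {V : Type*} [Fintype V] [DecidableEq V]

lemma flowSet_zero_mem (N : Network V) (y z : V) :
    0 ∈ {m : ℕ | ∃ f, IsFlow N y z f ∧ flowValue f y = (m : ℤ)} :=
  ⟨fun _ _ => 0, ⟨fun _ _ => Nat.zero_le _, fun _ _ _ => rfl⟩, by simp [flowValue]⟩

lemma flowSet_bddAbove (N : Network V) (y z : V) :
    BddAbove {m : ℕ | ∃ f, IsFlow N y z f ∧ flowValue f y = (m : ℤ)} := by
  refine ⟨∑ u, N.c y u, fun m hm => ?_⟩
  obtain ⟨f, hf, hval⟩ := hm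
  have h1 : (m : ℤ) ≤ ∑ u, (f y u : ℤ) := by
    rw [← hval]; unfold flowValue
    have : (0 : ℤ) ≤ ∑ u, (f u y : ℤ) :=
      Finset.sum_nonneg fun u _ => Int.natCast_nonneg _
    omega
  have h2 : (∑ u, (f y u : ℤ)) ≤ ∑ u, (N.c y u : ℤ) :=
    Finset.sum_le_sum fun u _ => by exact_mod_cast hf.1 y u
  have : (m : ℤ) ≤ ((∑ u, N.c y u : ℕ) : ℤ) := by rw [Nat.cast_sum]; omega
  exact_mod_cast this

lemma exists_maxFlow (N : Network V) (y z : V) : ∃ f, IsMaxFlow N y z f := by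
  have := Nat.sSup_mem ⟨0, flowSet_zero_mem N y z⟩ (flowSet_bddAbove N y z)
  obtain ⟨f, hf, hval⟩ := this
  exact ⟨f, hf, hval⟩

lemma pathSeq_isFlow_aux {N : Network V} {y z : V} {γ : List (List V)}
    (hγ : IsPathSeq N y z γ) :
    γ.length ∈ {m : ℕ | ∃ f, IsFlow N y z f ∧ flowValue f y = (m : ℤ)} := by
  classical
  by_cases hyz : y = z
  · -- impossible unless γ = []
    rcases γ with _ | ⟨p, t⟩
    · exact flowSet_zero_mem N y z
    · exfalso
      obtain ⟨h2, hnd, hh, hl, -⟩ := hγ.1 p (by simp)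
      obtain ⟨hy1, -, -, hz2, -⟩ := path_mem_facts h2 hnd hh hl
      rw [hyz] at hy1
      have : p.dropLast.Nodup := hnd.sublist (List.dropLast_sublist p)
      exact hz2 hy1
  · obtain ⟨hfl, hval, -⟩ := flow_of_pathSeq hyz hγ
    exact ⟨seqFlow γ, hfl, hval⟩

lemma seqSet_bddAbove (N : Network V) (y z : V) :
    BddAbove {m : ℕ | ∃ γ : List (List V), IsPathSeq N y z γ ∧ γ.length = m} := by
  obtain ⟨B, hB⟩ := flowSet_bddAbove N y z
  refine ⟨B, fun m hm => ?_⟩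
  obtain ⟨γ, hγ, rfl⟩ := hm
  exact hB (pathSeq_isFlow_aux hγ)

lemma empty_isPathSeq (N : Network V) (y z : V) : IsPathSeq N y z ([] : List (List V)) :=
  ⟨by simp, fun u v => by simp⟩

lemma maxSeqLen_eq_maxFlowValue (N : Network V) (y z : V) (hyz : y ≠ z) :
    maxSeqLen N y z = maxFlowValue N y z := by
  apply le_antisymm
  · have hne : Set.Nonempty {m : ℕ | ∃ γ : List (List V), IsPathSeq N y z γ ∧ γ.length = m} :=
      ⟨0, [], empty_isPathSeq N y z, rfl⟩
    apply csSup_le_csSup (flowSet_bddAbove N y z) hne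
    rintro m ⟨γ, hγ, rfl⟩
    exact pathSeq_isFlow_aux hγ
  · obtain ⟨f, hf, hval⟩ := exists_maxFlow N y z
    obtain ⟨γ, hlen, hpaths, hcount⟩ :=
      exists_pathSeq_of_flow hyz (maxFlowValue N y z) f hf hval
    apply le_csSup (seqSet_bddAbove N y z)
    refine ⟨γ, ⟨?_, ?_⟩, hlen⟩
    · intro p hp
      obtain ⟨h2, hnd, hh, hl, hc⟩ := hpaths p hp
      exact ⟨h2, hnd, hh, hl, hc.imp fun u v h => le_trans h (hf.1 u v)⟩
    · intro u v
      exact le_trans (hcount u v) (hf.1 u v)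

lemma part_one (N : Network V) (y z : V) (hyz : y ≠ z) (m : ℕ) :
    ∀ γ : List (List V),
      (IsPathSeq N y z γ ∧ γ.length = m) ↔
        ∃ f : V → V → ℕ, IsFlow N y z f ∧ flowValue f y = (m : ℤ) ∧
          ∃ w : List (List V), IsDecomposition N y z f γ w := by
  intro γ
  constructor
  · rintro ⟨hγ, rfl⟩
    obtain ⟨hfl, hval, hdec⟩ := flow_of_pathSeq hyz hγ
    exact ⟨seqFlow γ, hfl, hval, [], hdec⟩
  · rintro ⟨f, hf, hval, w, hpaths, hcycles, hlen, heq⟩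
    refine ⟨⟨hpaths, fun u v => ?_⟩, ?_⟩
    · calc γ.countP (fun p => decide ((u, v) ∈ pathArcs p))
          ≤ (γ.map fun p => chi p u v).sum := countP_le_sum γ u v
        _ ≤ f u v := by rw [heq u v]; omega
        _ ≤ N.c u v := hf.1 u v
    · have : (γ.length : ℤ) = (m : ℤ) := by rw [hlen, hval]
      exact_mod_cast this

end NetFlow


/-- (i) the sequences of `m` arc-disjoint paths from `y` to `z` are exactly
those appearing in a decomposition of some flow of value `m`; (ii) the maximum-length
sequences of arc-disjoint paths are exactly those appearing in a decomposition of some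
maximum flow. -/
theorem pathSeq_iff_decomposition {V : Type*} [Fintype V] [DecidableEq V]
    (hV : 2 ≤ Fintype.card V) (N : Network V) (y z : V) (hyz : y ≠ z) (m : ℕ) :
    (∀ γ : List (List V),
      (NetFlow.IsPathSeq N y z γ ∧ γ.length = m) ↔
        ∃ f : V → V → ℕ, NetFlow.IsFlow N y z f ∧ NetFlow.flowValue f y = (m : ℤ) ∧
          ∃ w : List (List V), NetFlow.IsDecomposition N y z f γ w) ∧
    (∀ γ : List (List V),
      γ ∈ NetFlow.MaxSeqs N y z ↔
        ∃ f : V → V → ℕ, NetFlow.IsMaxFlow N y z f ∧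
          ∃ w : List (List V), NetFlow.IsDecomposition N y z f γ w) := by
  refine ⟨NetFlow.part_one N y z hyz m, fun γ => ?_⟩
  have hkey := NetFlow.maxSeqLen_eq_maxFlowValue N y z hyz
  constructor
  · rintro ⟨hps, hlen⟩
    obtain ⟨f, hf, hval, w, hd⟩ :=
      (NetFlow.part_one N y z hyz (NetFlow.maxSeqLen N y z) γ).1 ⟨hps, hlen⟩
    exact ⟨f, ⟨hf, by rw [hval, hkey]⟩, w, hd⟩
  · rintro ⟨f, ⟨hf, hmax⟩, w, hd⟩
    exact (NetFlow.part_one N y z hyz (NetFlow.maxSeqLen N y z) γ).2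
      ⟨f, hf, by rw [hmax, hkey], w, hd⟩
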